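/- Partition the vertex set V into two parts V1, V2 and let H be the 2k-uniform hypergraph whose edges are all 2k-subsets of V that intersect each of V1 and V2 in an odd number of elements. Then H contains no copy of C^(2k)_3, i.e., there do not exist pairwise disjoint k-sets P1, P2, P3 such that all three unions P_i ∪ P_j (i≠j) are edges of H. -/
import Mathlib


/-- the 2k-uniform hypergraph whose edges are the 2k-sets intersecting each
part of a bipartition `V = V1 ∪ V1ᶜ` in an odd number of elements contains no `C^(2k)_3`. -/
theorem stmt_2 {V : Type*} [DecidableEq V] (k : ℕ) (hk : 0 < k) (V1 : Finset V)
    (IsEdge : Finset V → Prop)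
    (hEdge : ∀ e : Finset V, IsEdge e ↔
      e.card = 2 * k ∧ Odd (e ∩ V1).card ∧ Odd (e \ V1).card)
    (P1 P2 P3 : Finset V)
    (h1 : P1.card = k) (h2 : P2.card = k) (h3 : P3.card = k)
    (d12 : Disjoint P1 P2) (d13 : Disjoint P1 P3) (d23 : Disjoint P2 P3) :
    ¬ (IsEdge (P1 ∪ P2) ∧ IsEdge (P1 ∪ P3) ∧ IsEdge (P2 ∪ P3)) := by
  rintro ⟨e12, e13, e23⟩
  have key : ∀ P Q : Finset V, Disjoint P Q →
      ((P ∪ Q) ∩ V1).card = (P ∩ V1).card + (Q ∩ V1).card := by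
    intro P Q hPQ
    rw [Finset.union_inter_distrib_right, Finset.card_union_of_disjoint
      (hPQ.mono Finset.inter_subset_left Finset.inter_subset_left)]
  have o12 := ((hEdge _).mp e12).2.1
  have o13 := ((hEdge _).mp e13).2.1
  have o23 := ((hEdge _).mp e23).2.1
  rw [key _ _ d12] at o12
  rw [key _ _ d13] at o13
  rw [key _ _ d23] at o23
  rw [Nat.odd_add] at o12 o13 o23
  simp only [Nat.odd_iff, Nat.even_iff] at o12 o13 o23
  omega
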